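/- For every n ≥ 1, the identity of polynomials in three variables holds: Σ_{σ ∈ Q_n} x^{lap(σ)} y^{dasc(σ)} z^{dp(σ)} = Σ_{i=1}^{n} Σ_{j=0}^{n−1} γ_{n,i,j} · x^i (y+z)^j, where γ_{n,i,j} is the number of σ ∈ Q_n with lap(σ) = i, dasc(σ) = j and dp(σ) = 0. -/

import Mathlib

open Finset MvPolynomial

/-- Stirling permutations of order `n`, encoded as functions `Fin (2*n) → Fin (n+1)`
in one-line notation (position `i` holds the letter `σ (i) ∈ {1,…,n}`), such that each
letter `1,…,n` occurs exactly twice and all entries between the two occurrences of a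
letter are larger than that letter. -/
def StirlingSet (n : ℕ) : Finset (Fin (2*n) → Fin (n+1)) :=
  Finset.univ.filter (fun σ =>
    (∀ v : Fin (n+1), (v : ℕ) ≠ 0 →
        (Finset.univ.filter (fun i => σ i = v)).card = 2) ∧
    (∀ i j k : Fin (2*n), i < j → j < k → σ i = σ k → σ i < σ j))

/-- The letter at position `i ∈ {1,…,2n}` of a Stirling permutation, with the
convention that positions outside this range (in particular position `0`) hold `0`. -/
def sval {n : ℕ} (σ : Fin (2*n) → Fin (n+1)) (i : ℕ) : ℕ :=
  if h : 1 ≤ i ∧ i ≤ 2*n then (σ ⟨i - 1, by omega⟩ : ℕ) else 0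

/-- The number of ascent-plateaus: indices `2 ≤ i ≤ 2n-1` with `σ_{i-1} < σ_i = σ_{i+1}`. -/
def apQ {n : ℕ} (σ : Fin (2*n) → Fin (n+1)) : ℕ :=
  ((Finset.Icc 2 (2*n - 1)).filter
    (fun i => sval σ (i-1) < sval σ i ∧ sval σ i = sval σ (i+1))).card

/-- The number of left ascent-plateaus: indices `1 ≤ i ≤ 2n-1` with
`σ_{i-1} < σ_i = σ_{i+1}`, where `σ_0 = 0`. -/
def lapQ {n : ℕ} (σ : Fin (2*n) → Fin (n+1)) : ℕ :=
  ((Finset.Icc 1 (2*n - 1)).filter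
    (fun i => sval σ (i-1) < sval σ i ∧ sval σ i = sval σ (i+1))).card

/-- The number of double ascents: indices `1 ≤ i ≤ 2n-1` with
`σ_{i-1} < σ_i < σ_{i+1}`, where `σ_0 = 0`. -/
def dascQ {n : ℕ} (σ : Fin (2*n) → Fin (n+1)) : ℕ :=
  ((Finset.Icc 1 (2*n - 1)).filter
    (fun i => sval σ (i-1) < sval σ i ∧ sval σ i < sval σ (i+1))).card

/-- The number of descent-plateaus: indices `2 ≤ i ≤ 2n-1` with
`σ_{i-1} > σ_i = σ_{i+1}`. -/
def dpQ {n : ℕ} (σ : Fin (2*n) → Fin (n+1)) : ℕ :=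
  ((Finset.Icc 2 (2*n - 1)).filter
    (fun i => sval σ i < sval σ (i-1) ∧ sval σ i = sval σ (i+1))).card

/-- The number of ascents: indices `1 ≤ i ≤ 2n-1` with `σ_i < σ_{i+1}` or `i = 1`. -/
def ascQ {n : ℕ} (σ : Fin (2*n) → Fin (n+1)) : ℕ :=
  ((Finset.Icc 1 (2*n - 1)).filter
    (fun i => sval σ i < sval σ (i+1) ∨ i = 1)).card

/-- The number of plateaus: indices `1 ≤ i ≤ 2n-1` with `σ_i = σ_{i+1}`. -/
def platQ {n : ℕ} (σ : Fin (2*n) → Fin (n+1)) : ℕ :=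
  ((Finset.Icc 1 (2*n - 1)).filter (fun i => sval σ i = sval σ (i+1))).card

/-- The flag ascent-plateau number: `2·ap(σ)+1` if `σ_1 = σ_2`, and `2·ap(σ)` otherwise. -/
def fapQ {n : ℕ} (σ : Fin (2*n) → Fin (n+1)) : ℕ :=
  if 1 ≤ n ∧ sval σ 1 = sval σ 2 then 2 * apQ σ + 1 else 2 * apQ σ

/-- `γ_{n,i,j}`: the number of Stirling permutations of order `n` with `lap = i`,
`dasc = j` and `dp = 0`. -/
def gammaNum (n i j : ℕ) : ℕ :=
  ((StirlingSet n).filter (fun σ => lapQ σ = i ∧ dascQ σ = j ∧ dpQ σ = 0)).card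


section Defs
variable {n : ℕ}

/-- forward index map: cycle sending `P ↦ Q-1` and `i ↦ i-1` for `P < i < Q`. -/
def fwd (P Q i : ℕ) : ℕ := if i = P then Q - 1 else if P < i ∧ i < Q then i - 1 else i

/-- backward index map: inverse of `fwd` on `[1, 2n]`. -/
def bwd (P Q j : ℕ) : ℕ := if j = Q - 1 then P else if P ≤ j ∧ j + 1 ≤ Q - 1 then j + 1 else j

lemma fwd_bwd {P Q j : ℕ} (h1 : 1 ≤ P) (h2 : P + 2 ≤ Q) : fwd P Q (bwd P Q j) = j := by
  unfold fwd bwd; split_ifs <;> omega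

lemma bwd_fwd {P Q j : ℕ} (h1 : 1 ≤ P) (h2 : P + 2 ≤ Q) : bwd P Q (fwd P Q j) = j := by
  unfold fwd bwd; split_ifs <;> omega

lemma bwd_lo {P Q j : ℕ} (h2 : P + 2 ≤ Q) (h : j < P) : bwd P Q j = j := by
  unfold bwd; split_ifs <;> omega

lemma bwd_hi {P Q j : ℕ} (h2 : P + 2 ≤ Q) (h : Q ≤ j) : bwd P Q j = j := by
  unfold bwd; split_ifs <;> omega

lemma bwd_mid {P Q j : ℕ} (h1 : P ≤ j) (h2 : j + 2 ≤ Q) : bwd P Q j = j + 1 := by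
  unfold bwd; split_ifs <;> omega

lemma bwd_top {P Q : ℕ} (h2 : P + 2 ≤ Q) : bwd P Q (Q - 1) = P := by
  unfold bwd; split_ifs <;> omega

lemma bwd_range {P Q j : ℕ} (h1 : 1 ≤ P) (h2 : P + 2 ≤ Q) (h3 : Q ≤ 2*n)
    (h4 : 1 ≤ j) (h5 : j ≤ 2*n) : 1 ≤ bwd P Q j ∧ bwd P Q j ≤ 2*n := by
  unfold bwd; split_ifs <;> omega

lemma fwd_range {P Q j : ℕ} (h1 : 1 ≤ P) (h2 : P + 2 ≤ Q) (h3 : Q ≤ 2*n)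
    (h4 : 1 ≤ j) (h5 : j ≤ 2*n) : 1 ≤ fwd P Q j ∧ fwd P Q j ≤ 2*n := by
  unfold fwd; split_ifs <;> omega

/-- toggle a double-ascent configuration (letter at positions `P < Q`, 1-indexed)
into a descent-plateau configuration. -/
def togL (σ : Fin (2*n) → Fin (n+1)) (P Q : ℕ) : Fin (2*n) → Fin (n+1) :=
  fun i => if h : bwd P Q (i.1+1) - 1 < 2*n then σ ⟨_, h⟩ else σ i

/-- toggle a descent-plateau configuration back into a double-ascent configuration. -/
def togR (σ : Fin (2*n) → Fin (n+1)) (P Q : ℕ) : Fin (2*n) → Fin (n+1) :=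
  fun i => if h : fwd P Q (i.1+1) - 1 < 2*n then σ ⟨_, h⟩ else σ i

lemma sval_togL (σ : Fin (2*n) → Fin (n+1)) {P Q : ℕ} (h1 : 1 ≤ P) (h2 : P + 2 ≤ Q)
    (h3 : Q ≤ 2*n) (j : ℕ) : sval (togL σ P Q) j = sval σ (bwd P Q j) := by
  by_cases hj : 1 ≤ j ∧ j ≤ 2*n
  · have hb := bwd_range (n := n) h1 h2 h3 hj.1 hj.2
    rw [sval, dif_pos hj, sval, dif_pos hb, togL]
    have : j - 1 + 1 = j := by omega
    rw [this, dif_pos (by omega : bwd P Q j - 1 < 2*n)]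
  · have : bwd P Q j = j := by unfold bwd; split_ifs <;> omega
    rw [this, sval, dif_neg hj, sval, dif_neg hj]

lemma sval_togR (σ : Fin (2*n) → Fin (n+1)) {P Q : ℕ} (h1 : 1 ≤ P) (h2 : P + 2 ≤ Q)
    (h3 : Q ≤ 2*n) (j : ℕ) : sval (togR σ P Q) j = sval σ (fwd P Q j) := by
  by_cases hj : 1 ≤ j ∧ j ≤ 2*n
  · have hb := fwd_range (n := n) h1 h2 h3 hj.1 hj.2
    rw [sval, dif_pos hj, sval, dif_pos hb, togR]
    have : j - 1 + 1 = j := by omega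
    rw [this, dif_pos (by omega : fwd P Q j - 1 < 2*n)]
  · have : fwd P Q j = j := by unfold fwd; split_ifs <;> omega
    rw [this, sval, dif_neg hj, sval, dif_neg hj]

lemma togL_togR (σ : Fin (2*n) → Fin (n+1)) {P Q : ℕ} (h1 : 1 ≤ P) (h2 : P + 2 ≤ Q)
    (h3 : Q ≤ 2*n) : togL (togR σ P Q) P Q = σ := by
  funext i
  have hi : (i : ℕ) < 2*n := i.isLt
  have hb := bwd_range (n := n) h1 h2 h3 (by omega : 1 ≤ i.1+1) (by omega)
  rw [togL, dif_pos (by omega : bwd P Q (i.1+1) - 1 < 2*n), togR]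
  have e1 : bwd P Q (i.1+1) - 1 + 1 = bwd P Q (i.1+1) := by omega
  rw [e1, fwd_bwd h1 h2, dif_pos (by omega : i.1 + 1 - 1 < 2*n)]
  exact congrArg σ (by ext; simp)

lemma togR_togL (σ : Fin (2*n) → Fin (n+1)) {P Q : ℕ} (h1 : 1 ≤ P) (h2 : P + 2 ≤ Q)
    (h3 : Q ≤ 2*n) : togR (togL σ P Q) P Q = σ := by
  funext i
  have hi : (i : ℕ) < 2*n := i.isLt
  have hb := fwd_range (n := n) h1 h2 h3 (by omega : 1 ≤ i.1+1) (by omega)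
  rw [togR, dif_pos (by omega : fwd P Q (i.1+1) - 1 < 2*n), togL]
  have e1 : fwd P Q (i.1+1) - 1 + 1 = fwd P Q (i.1+1) := by omega
  rw [e1, bwd_fwd h1 h2, dif_pos (by omega : i.1 + 1 - 1 < 2*n)]
  exact congrArg σ (by ext; simp)

end Defs
section Stir
variable {n : ℕ} {σ : Fin (2*n) → Fin (n+1)}

lemma sval_fin (σ : Fin (2*n) → Fin (n+1)) (a : Fin (2*n)) : sval σ (a.1+1) = σ a := by
  rw [sval, dif_pos (by omega : 1 ≤ a.1+1 ∧ a.1+1 ≤ 2*n)]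
  exact congrArg _ (congrArg σ (by ext; simp))

lemma sval_le (σ : Fin (2*n) → Fin (n+1)) (j : ℕ) : sval σ j ≤ n := by
  rw [sval]; split
  · exact Nat.lt_succ_iff.mp (Fin.isLt _)
  · omega

lemma count_transfer (σ : Fin (2*n) → Fin (n+1)) (v : ℕ) (hv : 1 ≤ v) :
    (Finset.univ.filter (fun i => (σ i : ℕ) = v)).card
      = ((Finset.Icc 1 (2*n)).filter fun j => sval σ j = v).card := by
  apply Finset.card_bij (fun (a : Fin (2*n)) _ => a.1 + 1)
  · intro a ha
    simp only [Finset.mem_filter, Finset.mem_univ, true_and] at ha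
    simp only [Finset.mem_filter, Finset.mem_Icc]
    exact ⟨⟨by omega, by omega⟩, by rw [sval_fin]; exact ha⟩
  · intro a _ b _ h; exact Fin.ext (by omega)
  · intro j hj
    simp only [Finset.mem_filter, Finset.mem_Icc] at hj
    refine ⟨⟨j - 1, by omega⟩, ?_, by simp; omega⟩
    simp only [Finset.mem_filter, Finset.mem_univ, true_and]
    rw [← sval_fin σ ⟨j - 1, by omega⟩]
    norm_num
    rw [show j - 1 + 1 = j by omega]
    exact hj.2

lemma mem_stirling_iff :
    σ ∈ StirlingSet n ↔
      ((∀ v : Fin (n+1), (v : ℕ) ≠ 0 →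
        (Finset.univ.filter (fun i => σ i = v)).card = 2) ∧
      (∀ i j k : Fin (2*n), i < j → j < k → σ i = σ k → σ i < σ j)) := by
  unfold StirlingSet; simp

lemma stir_count (hσ : σ ∈ StirlingSet n) (v : ℕ) (hv1 : 1 ≤ v) (hv2 : v ≤ n) :
    ((Finset.Icc 1 (2*n)).filter fun j => sval σ j = v).card = 2 := by
  rw [← count_transfer σ v hv1]
  have h := (mem_stirling_iff.mp hσ).1 ⟨v, by omega⟩ (by simpa using by omega)
  have hset : (Finset.univ.filter (fun i => (σ i : ℕ) = v))
      = (Finset.univ.filter (fun i => σ i = (⟨v, by omega⟩ : Fin (n+1)))) := by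
    apply Finset.filter_congr; intro i _; simp [Fin.ext_iff]
  rw [hset]; exact h

lemma stir_nonzero (hσ : σ ∈ StirlingSet n) {j : ℕ} (h1 : 1 ≤ j) (h2 : j ≤ 2*n) :
    1 ≤ sval σ j := by
  by_contra h
  have hz : sval σ j = 0 := by omega
  -- count of zero fiber is 0
  have hcard : (Finset.univ : Finset (Fin (2*n))).card
      = ∑ v ∈ (Finset.univ : Finset (Fin (n+1))),
          (Finset.univ.filter (fun i => σ i = v)).card :=
    Finset.card_eq_sum_card_fiberwise (fun x _ => Finset.mem_univ _)
  have hsum : ∑ v ∈ (Finset.univ : Finset (Fin (n+1))),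
      (Finset.univ.filter (fun i => σ i = v)).card
      = (Finset.univ.filter (fun i => σ i = 0)).card
        + ∑ v ∈ (Finset.univ : Finset (Fin (n+1))).erase 0,
            (Finset.univ.filter (fun i => σ i = v)).card := by
    rw [← Finset.add_sum_erase _ _ (Finset.mem_univ 0)]
  have herase : ∀ v ∈ (Finset.univ : Finset (Fin (n+1))).erase 0,
      (Finset.univ.filter (fun i => σ i = v)).card = 2 := by
    intro v hv
    have hvne : v ≠ 0 := (Finset.mem_erase.mp hv).1
    exact (mem_stirling_iff.mp hσ).1 v (fun hc => hvne (Fin.ext (by simpa using hc)))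
  have hcard2 : ((Finset.univ : Finset (Fin (n+1))).erase 0).card = n := by
    rw [Finset.card_erase_of_mem (Finset.mem_univ 0)]; simp
  have htot : (Finset.univ : Finset (Fin (2*n))).card = 2*n := by simp
  have e2 : ∑ v ∈ (Finset.univ : Finset (Fin (n+1))).erase 0,
      (Finset.univ.filter (fun i => σ i = v)).card = 2 * n := by
    rw [Finset.sum_congr rfl herase, Finset.sum_const, hcard2, smul_eq_mul]; ring
  have key : 2*n = (Finset.univ.filter (fun i => σ i = 0)).card + 2*n := by
    calc 2*n = (Finset.univ : Finset (Fin (2*n))).card := htot.symm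
      _ = _ := hcard
      _ = _ := hsum
      _ = _ + 2*n := by rw [e2]
  have hz0 : (Finset.univ.filter (fun i => σ i = 0)).card = 0 := by omega
  have hmem : (⟨j - 1, by omega⟩ : Fin (2*n)) ∈ Finset.univ.filter (fun i => σ i = 0) := by
    simp only [Finset.mem_filter, Finset.mem_univ, true_and]
    apply Fin.ext
    have := sval_fin σ ⟨j - 1, by omega⟩
    simp only at this
    rw [show j - 1 + 1 = j by omega] at this
    simpa [← this] using hz
  rw [Finset.card_eq_zero] at hz0
  rw [hz0] at hmem
  exact absurd hmem (Finset.notMem_empty _)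

lemma stir_between (hσ : σ ∈ StirlingSet n) {x t y : ℕ} (h1 : 1 ≤ x) (h2 : x < t)
    (h3 : t < y) (h4 : y ≤ 2*n) (he : sval σ x = sval σ y) : sval σ x < sval σ t := by
  have hb := (mem_stirling_iff.mp hσ).2 ⟨x-1, by omega⟩ ⟨t-1, by omega⟩ ⟨y-1, by omega⟩
    (by simp [Fin.lt_def]; omega) (by simp [Fin.lt_def]; omega)
  have ex : sval σ x = σ ⟨x-1, by omega⟩ := by
    rw [← sval_fin σ ⟨x-1, by omega⟩]; norm_num; rw [show x - 1 + 1 = x by omega]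
  have et : sval σ t = σ ⟨t-1, by omega⟩ := by
    rw [← sval_fin σ ⟨t-1, by omega⟩]; norm_num; rw [show t - 1 + 1 = t by omega]
  have ey : sval σ y = σ ⟨y-1, by omega⟩ := by
    rw [← sval_fin σ ⟨y-1, by omega⟩]; norm_num; rw [show y - 1 + 1 = y by omega]
  have := hb (Fin.ext (by rw [← ex, ← ey]; exact he))
  rw [Fin.lt_def] at this
  omega

lemma stir_mk (hcount : ∀ v : ℕ, 1 ≤ v → v ≤ n →
      ((Finset.Icc 1 (2*n)).filter fun j => sval σ j = v).card = 2)
    (hbet : ∀ x t y : ℕ, 1 ≤ x → x < t → t < y → y ≤ 2*n →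
      sval σ x = sval σ y → sval σ x < sval σ t) : σ ∈ StirlingSet n := by
  rw [mem_stirling_iff]
  constructor
  · intro v hv
    have hv1 : 1 ≤ (v:ℕ) := by omega
    have hv2 : (v:ℕ) ≤ n := by omega
    rw [show (Finset.univ.filter (fun i => σ i = v))
        = (Finset.univ.filter (fun i => (σ i : ℕ) = (v:ℕ))) by
      apply Finset.filter_congr; intro i _; simp [Fin.ext_iff]]
    rw [count_transfer σ v hv1]
    exact hcount v hv1 hv2
  · intro i j k hij hjk he
    rw [Fin.lt_def] at hij hjk ⊢
    have h1 := hbet (i.1+1) (j.1+1) (k.1+1) (by omega) (by omega) (by omega) (by omega)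
    rw [sval_fin, sval_fin, sval_fin] at h1
    exact h1 (by rw [he])

end Stir
section Config
variable {n : ℕ}

/-- A double-ascent configuration: the letter `k = σ_P` occurs at positions `P < Q`,
everything strictly between is larger, and `σ_{P-1} < k`. -/
structure Cfg (n : ℕ) (σ : Fin (2*n) → Fin (n+1)) (P Q : ℕ) : Prop where
  mem : σ ∈ StirlingSet n
  hP : 1 ≤ P
  hPQ : P + 2 ≤ Q
  hQ : Q ≤ 2*n
  hEq : sval σ P = sval σ Q
  ha : sval σ (P-1) < sval σ P
  hw : ∀ t, P < t → t < Q → sval σ P < sval σ t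

variable {σ : Fin (2*n) → Fin (n+1)} {P Q : ℕ}

lemma Cfg.k_pos (c : Cfg n σ P Q) : 1 ≤ sval σ P :=
  stir_nonzero c.mem c.hP (by have := c.hPQ; have := c.hQ; omega)

lemma Cfg.occ (c : Cfg n σ P Q) : ∀ t, sval σ t = sval σ P → t = P ∨ t = Q := by
  intro t ht
  have hk1 := c.k_pos
  have hkn : sval σ P ≤ n := sval_le σ P
  have hcard := stir_count c.mem (sval σ P) hk1 hkn
  have ht2 : 1 ≤ t ∧ t ≤ 2*n := by
    by_contra h
    rw [sval, dif_neg (by omega)] at ht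
    omega
  have hPQne : P ≠ Q := by have := c.hPQ; omega
  have hsub : ({P, Q} : Finset ℕ) ⊆ (Finset.Icc 1 (2*n)).filter fun j => sval σ j = sval σ P := by
    intro z hz
    simp only [Finset.mem_insert, Finset.mem_singleton] at hz
    rcases hz with rfl | rfl
    · exact Finset.mem_filter.mpr ⟨Finset.mem_Icc.mpr
        ⟨c.hP, by have := c.hPQ; have := c.hQ; omega⟩, rfl⟩
    · exact Finset.mem_filter.mpr ⟨Finset.mem_Icc.mpr
        ⟨by have := c.hP; have := c.hPQ; omega, c.hQ⟩, c.hEq.symm⟩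
  have hcard2 : ({P, Q} : Finset ℕ).card = 2 := by
    rw [Finset.card_insert_of_notMem (by simpa using hPQne), Finset.card_singleton]
  have heq : ((Finset.Icc 1 (2*n)).filter fun j => sval σ j = sval σ P) = {P, Q} :=
    (Finset.eq_of_subset_of_card_le hsub (by omega)).symm
  have : t ∈ (Finset.Icc 1 (2*n)).filter fun j => sval σ j = sval σ P := by
    simp only [Finset.mem_filter, Finset.mem_Icc]; exact ⟨⟨ht2.1, ht2.2⟩, ht⟩
  rw [heq] at this
  simpa using this

/-- All three local statistics are preserved, position-wise, by the toggle, away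
from the special position `P`. -/
lemma status (c : Cfg n σ P Q) (i : ℕ) (hi1 : 1 ≤ i) (hi2 : i + 1 ≤ 2*n) (hiP : i ≠ P) :
    ((sval (togL σ P Q) (fwd P Q i - 1) < sval (togL σ P Q) (fwd P Q i) ∧
        sval (togL σ P Q) (fwd P Q i) = sval (togL σ P Q) (fwd P Q i + 1)) ↔
      (sval σ (i-1) < sval σ i ∧ sval σ i = sval σ (i+1))) ∧
    ((sval (togL σ P Q) (fwd P Q i - 1) < sval (togL σ P Q) (fwd P Q i) ∧
        sval (togL σ P Q) (fwd P Q i) < sval (togL σ P Q) (fwd P Q i + 1)) ↔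
      (sval σ (i-1) < sval σ i ∧ sval σ i < sval σ (i+1))) ∧
    ((sval (togL σ P Q) (fwd P Q i) < sval (togL σ P Q) (fwd P Q i - 1) ∧
        sval (togL σ P Q) (fwd P Q i) = sval (togL σ P Q) (fwd P Q i + 1)) ↔
      (sval σ i < sval σ (i-1) ∧ sval σ i = sval σ (i+1))) := by
  have hs' := sval_togL σ c.hP c.hPQ c.hQ
  have hP := c.hP; have hPQ := c.hPQ; have hQ := c.hQ
  -- the three σ'-atoms
  by_cases hA : i < P
  · have hf : fwd P Q i = i := by unfold fwd; split_ifs <;> omega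
    rw [hf]
    have eL : sval (togL σ P Q) (i - 1) = sval σ (i-1) := by
      rw [hs']; congr 1; unfold bwd; split_ifs <;> omega
    have eM : sval (togL σ P Q) i = sval σ i := by
      rw [hs']; congr 1; unfold bwd; split_ifs <;> omega
    by_cases hA2 : i + 1 < P
    · have eR : sval (togL σ P Q) (i + 1) = sval σ (i+1) := by
        rw [hs']; congr 1; unfold bwd; split_ifs <;> omega
      omega
    · -- i + 1 = P
      have eR : sval (togL σ P Q) (i + 1) = sval σ (P+1) := by
        rw [hs']; congr 1; unfold bwd; split_ifs <;> omega
      have e2 : sval σ i = sval σ (P-1) := by rw [show i = P-1 by omega]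
      have e3 : sval σ (i+1) = sval σ P := by rw [show i+1 = P by omega]
      have f1 := c.ha
      have f2 := c.hw (P+1) (by omega) (by omega)
      omega
  · by_cases hC : i < Q
    · -- P < i < Q
      have hiP' : P < i := by omega
      have hf : fwd P Q i = i - 1 := by unfold fwd; split_ifs <;> omega
      rw [hf]
      have eM : sval (togL σ P Q) (i - 1) = sval σ i := by
        rw [hs']; congr 1; unfold bwd; split_ifs <;> omega
      have f2 := c.hw i (by omega) (by omega)
      by_cases hCL : P + 2 ≤ i
      · have eL : sval (togL σ P Q) (i - 1 - 1) = sval σ (i-1) := by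
          rw [hs']; congr 1; unfold bwd; split_ifs <;> omega
        by_cases hCR : i ≤ Q - 2
        · have eR : sval (togL σ P Q) (i - 1 + 1) = sval σ (i+1) := by
            rw [hs']; congr 1; unfold bwd; split_ifs <;> omega
          omega
        · -- i = Q - 1
          have eR : sval (togL σ P Q) (i - 1 + 1) = sval σ P := by
            rw [hs']; congr 1; unfold bwd; split_ifs <;> omega
          have e3 : sval σ (i+1) = sval σ Q := by rw [show i+1 = Q by omega]
          have f3 := c.hEq
          omega
      · -- i = P + 1
        have eL : sval (togL σ P Q) (i - 1 - 1) = sval σ (P-1) := by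
          rw [hs']; congr 1; unfold bwd; split_ifs <;> omega
        have e2 : sval σ (i-1) = sval σ P := by rw [show i-1 = P by omega]
        have f1 := c.ha
        by_cases hCR : i ≤ Q - 2
        · have eR : sval (togL σ P Q) (i - 1 + 1) = sval σ (i+1) := by
            rw [hs']; congr 1; unfold bwd; split_ifs <;> omega
          omega
        · have eR : sval (togL σ P Q) (i - 1 + 1) = sval σ P := by
            rw [hs']; congr 1; unfold bwd; split_ifs <;> omega
          have e3 : sval σ (i+1) = sval σ Q := by rw [show i+1 = Q by omega]
          have f3 := c.hEq
          omega
    · by_cases hD : i = Q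
      · have hf : fwd P Q i = i := by unfold fwd; split_ifs <;> omega
        rw [hf]
        have eL : sval (togL σ P Q) (i - 1) = sval σ P := by
          rw [hs']; congr 1; unfold bwd; split_ifs <;> omega
        have eM : sval (togL σ P Q) i = sval σ i := by
          rw [hs']; congr 1; unfold bwd; split_ifs <;> omega
        have eR : sval (togL σ P Q) (i + 1) = sval σ (i+1) := by
          rw [hs']; congr 1; unfold bwd; split_ifs <;> omega
        have e2 : sval σ i = sval σ Q := by rw [hD]
        have e3 : sval σ (i-1) = sval σ (Q-1) := by rw [hD]
        have f2 := c.hw (Q-1) (by omega) (by omega)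
        have f3 := c.hEq
        have hne : sval σ (i+1) ≠ sval σ P := by
          intro h
          rcases c.occ (i+1) h with h' | h' <;> omega
        omega
      · -- i > Q
        have hf : fwd P Q i = i := by unfold fwd; split_ifs <;> omega
        rw [hf]
        have eL : sval (togL σ P Q) (i - 1) = sval σ (i-1) := by
          rw [hs']; congr 1; unfold bwd; split_ifs <;> omega
        have eM : sval (togL σ P Q) i = sval σ i := by
          rw [hs']; congr 1; unfold bwd; split_ifs <;> omega
        have eR : sval (togL σ P Q) (i + 1) = sval σ (i+1) := by
          rw [hs']; congr 1; unfold bwd; split_ifs <;> omega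
        omega

/-- Behaviour at the special position: the double ascent at `P` becomes a
descent-plateau at `Q-1`. -/
lemma status_P (c : Cfg n σ P Q) :
    (sval σ (P-1) < sval σ P ∧ sval σ P < sval σ (P+1)) ∧
    (sval (togL σ P Q) (Q-1) < sval (togL σ P Q) (Q-1-1) ∧
      sval (togL σ P Q) (Q-1) = sval (togL σ P Q) (Q-1+1)) ∧
    sval σ P ≠ sval σ (P+1) ∧
    ¬ (sval (togL σ P Q) (Q-1-1) < sval (togL σ P Q) (Q-1)) := by
  have hs' := sval_togL σ c.hP c.hPQ c.hQ
  have hP := c.hP; have hPQ := c.hPQ; have hQ := c.hQ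
  have f1 := c.ha
  have f2 := c.hw (P+1) (by omega) (by omega)
  have f3 := c.hw (Q-1) (by omega) (by omega)
  have eA : sval (togL σ P Q) (Q-1) = sval σ P := by
    rw [hs']; congr 1; unfold bwd; split_ifs <;> omega
  have eB : sval (togL σ P Q) (Q-1-1) = sval σ (Q-1) := by
    rw [hs']; congr 1; unfold bwd; split_ifs <;> omega
  have eC : sval (togL σ P Q) (Q-1+1) = sval σ Q := by
    rw [hs']; congr 1; unfold bwd; split_ifs <;> omega
  have f4 := c.hEq
  omega

end Config
section Mem
variable {n : ℕ} {σ : Fin (2*n) → Fin (n+1)} {P Q : ℕ}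

lemma Cfg.dichotomy (c : Cfg n σ P Q) {x y : ℕ} (hx1 : 1 ≤ x) (hxy : x < y)
    (hy : y ≤ 2*n) (hvx : sval σ x = sval σ y) (hvk : sval σ x ≠ sval σ P) :
    (P < x ∧ y < Q) ∨ (x < P ∧ Q < y) ∨ y < P ∨ Q < x := by
  have hP := c.hP; have hPQ := c.hPQ; have hQ := c.hQ
  have hxP : x ≠ P := fun h => hvk (by rw [h])
  have hxQ : x ≠ Q := fun h => hvk (by rw [h] at hvx ⊢; rw [c.hEq])
  have hyP : y ≠ P := fun h => hvk (by rw [← h, hvx])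
  have hyQ : y ≠ Q := fun h => hvk (by rw [hvx, h, ← c.hEq])
  have excl1 : ¬(x < P ∧ P < y ∧ y < Q) := by
    rintro ⟨e1, e2, e3⟩
    have h1 := stir_between c.mem hx1 e1 e2 (by omega) hvx
    have h2 := c.hw y e2 e3
    omega
  have excl2 : ¬(P < x ∧ x < Q ∧ Q < y) := by
    rintro ⟨e1, e2, e3⟩
    have h1 := stir_between c.mem hx1 e2 e3 (by omega) hvx
    have h2 := c.hw x e1 e2
    rw [c.hEq] at h2
    omega
  omega

lemma Cfg.togL_mem (c : Cfg n σ P Q) : togL σ P Q ∈ StirlingSet n := by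
  have hP := c.hP; have hPQ := c.hPQ; have hQ := c.hQ
  have hs' := sval_togL σ c.hP c.hPQ c.hQ
  apply stir_mk
  · intro v hv1 hv2
    refine Eq.trans ?_ (stir_count c.mem v hv1 hv2)
    apply Finset.card_nbij' (bwd P Q) (fwd P Q)
    · intro j hj
      simp only [Finset.mem_coe, Finset.mem_filter, Finset.mem_Icc] at hj ⊢
      have hr := bwd_range (n := n) hP hPQ hQ hj.1.1 hj.1.2
      exact ⟨⟨hr.1, hr.2⟩, by rw [← hs']; exact hj.2⟩
    · intro t ht
      simp only [Finset.mem_coe, Finset.mem_filter, Finset.mem_Icc] at ht ⊢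
      have hr := fwd_range (n := n) hP hPQ hQ ht.1.1 ht.1.2
      exact ⟨⟨hr.1, hr.2⟩, by rw [hs', bwd_fwd hP hPQ]; exact ht.2⟩
    · intro j _; exact fwd_bwd hP hPQ
    · intro t _; exact bwd_fwd hP hPQ
  · intro x t y hx1 hxt hty hy2 he
    simp only [hs'] at he ⊢
    by_cases hvk : sval σ (bwd P Q x) = sval σ P
    · -- the letter k itself: occupies Q-1 and Q in σ'
      have ox := c.occ _ hvk
      have oy := c.occ _ (by rw [← he]; exact hvk)
      have hxQ : x = Q - 1 ∨ x = Q := by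
        rcases ox with h | h
        · left; have := congrArg (fwd P Q) h; rwa [fwd_bwd hP hPQ, show fwd P Q P = Q - 1 by
            unfold fwd; split_ifs <;> omega] at this
        · right; have := congrArg (fwd P Q) h; rwa [fwd_bwd hP hPQ, show fwd P Q Q = Q by
            unfold fwd; split_ifs <;> omega] at this
      have hyQ : y = Q - 1 ∨ y = Q := by
        rcases oy with h | h
        · left; have := congrArg (fwd P Q) h; rwa [fwd_bwd hP hPQ, show fwd P Q P = Q - 1 by
            unfold fwd; split_ifs <;> omega] at this
        · right; have := congrArg (fwd P Q) h; rwa [fwd_bwd hP hPQ, show fwd P Q Q = Q by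
            unfold fwd; split_ifs <;> omega] at this
      omega
    · -- a different letter
      have hx' : x = fwd P Q (bwd P Q x) := (fwd_bwd hP hPQ).symm
      have hy' : y = fwd P Q (bwd P Q y) := (fwd_bwd hP hPQ).symm
      have hx₀r := bwd_range (n := n) hP hPQ hQ (by omega : 1 ≤ x) (by omega : x ≤ 2*n)
      have hy₀r := bwd_range (n := n) hP hPQ hQ (by omega : 1 ≤ y) (by omega : y ≤ 2*n)
      have hne : bwd P Q x ≠ bwd P Q y := by
        intro h
        have : x = y := by rw [hx', hy', h]
        omega
      rcases Nat.lt_or_ge (bwd P Q x) (bwd P Q y) with hlt | hge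
      · have hd := c.dichotomy hx₀r.1 hlt hy₀r.2 he hvk
        rcases hd with ⟨h1, h2⟩ | ⟨h1, h2⟩ | h1 | h1
        · have ex : x = bwd P Q x - 1 := hx'.trans (by unfold fwd; split_ifs <;> omega)
          have ey : y = bwd P Q y - 1 := hy'.trans (by unfold fwd; split_ifs <;> omega)
          have hbt : bwd P Q t = t + 1 := by unfold bwd; split_ifs <;> omega
          rw [hbt]
          exact stir_between c.mem (by omega) (by omega) (by omega) (by omega) he
        · have ex : x = bwd P Q x := hx'.trans (by unfold fwd; split_ifs <;> omega)
          have ey : y = bwd P Q y := hy'.trans (by unfold fwd; split_ifs <;> omega)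
          have hbt : bwd P Q x < bwd P Q t ∧ bwd P Q t < bwd P Q y := by
            unfold bwd; split_ifs <;> omega
          exact stir_between c.mem (by omega) hbt.1 hbt.2 (by omega) he
        · have ex : x = bwd P Q x := hx'.trans (by unfold fwd; split_ifs <;> omega)
          have ey : y = bwd P Q y := hy'.trans (by unfold fwd; split_ifs <;> omega)
          have hbt : bwd P Q t = t := by unfold bwd; split_ifs <;> omega
          rw [hbt]
          exact stir_between c.mem (by omega) (by omega) (by omega) (by omega) he
        · have ex : x = bwd P Q x := hx'.trans (by unfold fwd; split_ifs <;> omega)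
          have ey : y = bwd P Q y := hy'.trans (by unfold fwd; split_ifs <;> omega)
          have hbt : bwd P Q t = t := by unfold bwd; split_ifs <;> omega
          rw [hbt]
          exact stir_between c.mem (by omega) (by omega) (by omega) (by omega) he
      · have hlt : bwd P Q y < bwd P Q x := by omega
        have hd := c.dichotomy hy₀r.1 hlt hx₀r.2 he.symm (by rw [← he]; exact hvk)
        rcases hd with ⟨h1, h2⟩ | ⟨h1, h2⟩ | h1 | h1
        · have ex : x = bwd P Q x - 1 := hx'.trans (by unfold fwd; split_ifs <;> omega)
          have ey : y = bwd P Q y - 1 := hy'.trans (by unfold fwd; split_ifs <;> omega)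
          omega
        · have ex : x = bwd P Q x := hx'.trans (by unfold fwd; split_ifs <;> omega)
          have ey : y = bwd P Q y := hy'.trans (by unfold fwd; split_ifs <;> omega)
          omega
        · have ex : x = bwd P Q x := hx'.trans (by unfold fwd; split_ifs <;> omega)
          have ey : y = bwd P Q y := hy'.trans (by unfold fwd; split_ifs <;> omega)
          omega
        · have ex : x = bwd P Q x := hx'.trans (by unfold fwd; split_ifs <;> omega)
          have ey : y = bwd P Q y := hy'.trans (by unfold fwd; split_ifs <;> omega)
          omega

end Mem
section Mem2
variable {n : ℕ}

/-- A descent-plateau configuration: the letter `k` occupies adjacent positions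
`Q-1, Q`, positions `P..Q-2` form the maximal run of larger letters before it,
and `σ_{P-1} < k`. -/
structure Cfg' (n : ℕ) (σ : Fin (2*n) → Fin (n+1)) (P Q : ℕ) : Prop where
  mem : σ ∈ StirlingSet n
  hP : 1 ≤ P
  hPQ : P + 2 ≤ Q
  hQ : Q ≤ 2*n
  hEq : sval σ (Q-1) = sval σ Q
  ha : sval σ (P-1) < sval σ (Q-1)
  hw : ∀ t, P ≤ t → t ≤ Q-2 → sval σ (Q-1) < sval σ t

variable {σ : Fin (2*n) → Fin (n+1)} {P Q : ℕ}

lemma Cfg'.k_pos (c : Cfg' n σ P Q) : 1 ≤ sval σ (Q-1) :=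
  stir_nonzero c.mem (by have := c.hP; have := c.hPQ; omega) (by have := c.hQ; omega)

lemma Cfg'.occ (c : Cfg' n σ P Q) : ∀ t, sval σ t = sval σ (Q-1) → t = Q-1 ∨ t = Q := by
  intro t ht
  have hP := c.hP; have hPQ := c.hPQ; have hQ := c.hQ
  have hk1 := c.k_pos
  have hkn : sval σ (Q-1) ≤ n := sval_le σ (Q-1)
  have hcard := stir_count c.mem (sval σ (Q-1)) hk1 hkn
  have ht2 : 1 ≤ t ∧ t ≤ 2*n := by
    by_contra h
    rw [sval, dif_neg (by omega)] at ht
    omega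
  have hne : Q - 1 ≠ Q := by omega
  have hsub : ({Q-1, Q} : Finset ℕ) ⊆
      (Finset.Icc 1 (2*n)).filter fun j => sval σ j = sval σ (Q-1) := by
    intro z hz
    simp only [Finset.mem_insert, Finset.mem_singleton] at hz
    rcases hz with rfl | rfl
    · exact Finset.mem_filter.mpr ⟨Finset.mem_Icc.mpr ⟨by omega, by omega⟩, rfl⟩
    · exact Finset.mem_filter.mpr ⟨Finset.mem_Icc.mpr ⟨by omega, by omega⟩, c.hEq.symm⟩
  have hcard2 : ({Q-1, Q} : Finset ℕ).card = 2 := by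
    rw [Finset.card_insert_of_notMem (by simpa using hne), Finset.card_singleton]
  have heq : ((Finset.Icc 1 (2*n)).filter fun j => sval σ j = sval σ (Q-1)) = {Q-1, Q} :=
    (Finset.eq_of_subset_of_card_le hsub (by omega)).symm
  have : t ∈ (Finset.Icc 1 (2*n)).filter fun j => sval σ j = sval σ (Q-1) := by
    simp only [Finset.mem_filter, Finset.mem_Icc]; exact ⟨⟨ht2.1, ht2.2⟩, ht⟩
  rw [heq] at this
  simpa using this

lemma Cfg'.dichotomy (c : Cfg' n σ P Q) {x y : ℕ} (hx1 : 1 ≤ x) (hxy : x < y)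
    (hy : y ≤ 2*n) (hvx : sval σ x = sval σ y) (hvk : sval σ x ≠ sval σ (Q-1)) :
    (P ≤ x ∧ y ≤ Q-2) ∨ (x < P ∧ Q < y) ∨ y < P ∨ Q < x := by
  have hP := c.hP; have hPQ := c.hPQ; have hQ := c.hQ
  have hx1' : x ≠ Q-1 := fun h => hvk (by rw [h])
  have hx2' : x ≠ Q := fun h => hvk (by rw [h] at hvx ⊢; rw [c.hEq])
  have hy1' : y ≠ Q-1 := fun h => hvk (by rw [← h, hvx])
  have hy2' : y ≠ Q := fun h => hvk (by rw [hvx, h, ← c.hEq])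
  have excl1 : ¬(x < P ∧ P ≤ y ∧ y ≤ Q-2) := by
    rintro ⟨e1, e2, e3⟩
    have hv := c.hw y e2 e3
    by_cases hxp : x = P - 1
    · have : sval σ x = sval σ (P-1) := by rw [hxp]
      have := c.ha
      omega
    · have h1 := stir_between c.mem hx1 (show x < P-1 by omega) (show P-1 < y by omega)
        (by omega) hvx
      have := c.ha
      omega
  have excl2 : ¬(P ≤ x ∧ x ≤ Q-2 ∧ Q < y) := by
    rintro ⟨e1, e2, e3⟩
    have hv := c.hw x e1 e2
    have h1 := stir_between c.mem hx1 (show x < Q by omega) e3 (by omega) hvx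
    have e4 : sval σ Q = sval σ (Q-1) := c.hEq.symm
    omega
  omega

lemma Cfg'.togR_mem (c : Cfg' n σ P Q) : togR σ P Q ∈ StirlingSet n := by
  have hP := c.hP; have hPQ := c.hPQ; have hQ := c.hQ
  have hs' := sval_togR σ c.hP c.hPQ c.hQ
  apply stir_mk
  · intro v hv1 hv2
    refine Eq.trans ?_ (stir_count c.mem v hv1 hv2)
    apply Finset.card_nbij' (fwd P Q) (bwd P Q)
    · intro j hj
      simp only [Finset.mem_coe, Finset.mem_filter, Finset.mem_Icc] at hj ⊢
      have hr := fwd_range (n := n) hP hPQ hQ hj.1.1 hj.1.2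
      exact ⟨⟨hr.1, hr.2⟩, by rw [← hs']; exact hj.2⟩
    · intro t ht
      simp only [Finset.mem_coe, Finset.mem_filter, Finset.mem_Icc] at ht ⊢
      have hr := bwd_range (n := n) hP hPQ hQ ht.1.1 ht.1.2
      exact ⟨⟨hr.1, hr.2⟩, by rw [hs', fwd_bwd hP hPQ]; exact ht.2⟩
    · intro j _; exact bwd_fwd hP hPQ
    · intro t _; exact fwd_bwd hP hPQ
  · intro x t y hx1 hxt hty hy2 he
    simp only [hs'] at he ⊢
    by_cases hvk : sval σ (fwd P Q x) = sval σ (Q-1)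
    · -- the letter k itself: occupies P and Q in togR σ
      have ox := c.occ _ hvk
      have oy := c.occ _ (by rw [← he]; exact hvk)
      have hxq : x = P ∨ x = Q := by
        rcases ox with h | h
        · left; have := congrArg (bwd P Q) h; rwa [bwd_fwd hP hPQ, bwd_top hPQ] at this
        · right; have := congrArg (bwd P Q) h; rwa [bwd_fwd hP hPQ, bwd_hi hPQ le_rfl] at this
      have hyq : y = P ∨ y = Q := by
        rcases oy with h | h
        · left; have := congrArg (bwd P Q) h; rwa [bwd_fwd hP hPQ, bwd_top hPQ] at this
        · right; have := congrArg (bwd P Q) h; rwa [bwd_fwd hP hPQ, bwd_hi hPQ le_rfl] at this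
      have hx' : x = P := by omega
      have hy' : y = Q := by omega
      have hft : fwd P Q t = t - 1 := by unfold fwd; split_ifs <;> omega
      rw [hft]
      have h1 := c.hw (t-1) (by omega) (by omega)
      have e1 : sval σ (fwd P Q x) = sval σ (Q-1) := hvk
      omega
    · -- a different letter
      have hx' : x = bwd P Q (fwd P Q x) := (bwd_fwd hP hPQ).symm
      have hy' : y = bwd P Q (fwd P Q y) := (bwd_fwd hP hPQ).symm
      have hx₀r := fwd_range (n := n) hP hPQ hQ (by omega : 1 ≤ x) (by omega : x ≤ 2*n)
      have hy₀r := fwd_range (n := n) hP hPQ hQ (by omega : 1 ≤ y) (by omega : y ≤ 2*n)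
      have hne : fwd P Q x ≠ fwd P Q y := by
        intro h
        have : x = y := by rw [hx', hy', h]
        omega
      rcases Nat.lt_or_ge (fwd P Q x) (fwd P Q y) with hlt | hge
      · have hd := c.dichotomy hx₀r.1 hlt hy₀r.2 he hvk
        rcases hd with ⟨h1, h2⟩ | ⟨h1, h2⟩ | h1 | h1
        · -- both inside the run w
          have ex : x = fwd P Q x + 1 := hx'.trans (by unfold bwd; split_ifs <;> omega)
          have ey : y = fwd P Q y + 1 := hy'.trans (by unfold bwd; split_ifs <;> omega)
          have hbt : fwd P Q t = t - 1 := by unfold fwd; split_ifs <;> omega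
          rw [hbt]
          exact stir_between c.mem (by omega) (by omega) (by omega) (by omega) he
        · have ex : x = fwd P Q x := hx'.trans (by unfold bwd; split_ifs <;> omega)
          have ey : y = fwd P Q y := hy'.trans (by unfold bwd; split_ifs <;> omega)
          have hbt : fwd P Q x < fwd P Q t ∧ fwd P Q t < fwd P Q y := by
            unfold fwd; split_ifs <;> omega
          exact stir_between c.mem (by omega) hbt.1 hbt.2 (by omega) he
        · have ex : x = fwd P Q x := hx'.trans (by unfold bwd; split_ifs <;> omega)
          have ey : y = fwd P Q y := hy'.trans (by unfold bwd; split_ifs <;> omega)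
          have hbt : fwd P Q t = t := by unfold fwd; split_ifs <;> omega
          rw [hbt]
          exact stir_between c.mem (by omega) (by omega) (by omega) (by omega) he
        · have ex : x = fwd P Q x := hx'.trans (by unfold bwd; split_ifs <;> omega)
          have ey : y = fwd P Q y := hy'.trans (by unfold bwd; split_ifs <;> omega)
          have hbt : fwd P Q t = t := by unfold fwd; split_ifs <;> omega
          rw [hbt]
          exact stir_between c.mem (by omega) (by omega) (by omega) (by omega) he
      · have hlt : fwd P Q y < fwd P Q x := by omega
        have hd := c.dichotomy hy₀r.1 hlt hx₀r.2 he.symm (by rw [← he]; exact hvk)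
        rcases hd with ⟨h1, h2⟩ | ⟨h1, h2⟩ | h1 | h1
        · have ex : x = fwd P Q x + 1 := hx'.trans (by unfold bwd; split_ifs <;> omega)
          have ey : y = fwd P Q y + 1 := hy'.trans (by unfold bwd; split_ifs <;> omega)
          omega
        · have ex : x = fwd P Q x := hx'.trans (by unfold bwd; split_ifs <;> omega)
          have ey : y = fwd P Q y := hy'.trans (by unfold bwd; split_ifs <;> omega)
          omega
        · have ex : x = fwd P Q x := hx'.trans (by unfold bwd; split_ifs <;> omega)
          have ey : y = fwd P Q y := hy'.trans (by unfold bwd; split_ifs <;> omega)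
          omega
        · have ex : x = fwd P Q x := hx'.trans (by unfold bwd; split_ifs <;> omega)
          have ey : y = fwd P Q y := hy'.trans (by unfold bwd; split_ifs <;> omega)
          omega

end Mem2
section Stats
variable {n : ℕ} {σ : Fin (2*n) → Fin (n+1)} {P Q : ℕ}

lemma Cfg.fwd_bounds (c : Cfg n σ P Q) {i : ℕ} (h1 : 1 ≤ i) (h2 : i ≤ 2*n - 1) :
    1 ≤ fwd P Q i ∧ fwd P Q i ≤ 2*n - 1 := by
  have hP := c.hP; have hPQ := c.hPQ; have hQ := c.hQ
  unfold fwd; split_ifs <;> omega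

lemma Cfg.bwd_bounds (c : Cfg n σ P Q) {j : ℕ} (h1 : 1 ≤ j) (h2 : j ≤ 2*n - 1) :
    1 ≤ bwd P Q j ∧ bwd P Q j ≤ 2*n - 1 := by
  have hP := c.hP; have hPQ := c.hPQ; have hQ := c.hQ
  unfold bwd; split_ifs <;> omega

lemma Cfg.lap_eq (c : Cfg n σ P Q) : lapQ (togL σ P Q) = lapQ σ := by
  have hP := c.hP; have hPQ := c.hPQ; have hQ := c.hQ
  unfold lapQ
  apply Finset.card_nbij' (bwd P Q) (fwd P Q)
  · intro j hj
    simp only [Finset.mem_coe, Finset.mem_filter, Finset.mem_Icc] at hj ⊢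
    have hb := c.bwd_bounds hj.1.1 hj.1.2
    refine ⟨⟨hb.1, hb.2⟩, ?_⟩
    have hne : bwd P Q j ≠ P := by
      intro h
      have hjq : j = Q - 1 := by
        have := congrArg (fwd P Q) h
        rwa [fwd_bwd hP hPQ, show fwd P Q P = Q-1 by unfold fwd; split_ifs <;> omega] at this
      have hsp := (status_P c).2.2.2
      rw [hjq] at hj
      exact hsp hj.2.1
    have hst := (status c (bwd P Q j) hb.1 (by omega) hne).1
    rw [fwd_bwd hP hPQ] at hst
    exact hst.mp hj.2
  · intro i hi
    simp only [Finset.mem_coe, Finset.mem_filter, Finset.mem_Icc] at hi ⊢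
    have hb := c.fwd_bounds hi.1.1 hi.1.2
    refine ⟨⟨hb.1, hb.2⟩, ?_⟩
    have hne : i ≠ P := by
      intro h
      have := (status_P c).2.2.1
      rw [h] at hi
      exact this hi.2.2
    exact ((status c i hi.1.1 (by omega) hne).1).mpr hi.2
  · intro j _; exact fwd_bwd hP hPQ
  · intro i _; exact bwd_fwd hP hPQ

lemma Cfg.dasc_eq (c : Cfg n σ P Q) : dascQ σ = dascQ (togL σ P Q) + 1 := by
  have hP := c.hP; have hPQ := c.hPQ; have hQ := c.hQ
  have hmem : P ∈ (Finset.Icc 1 (2*n - 1)).filter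
      (fun i => sval σ (i-1) < sval σ i ∧ sval σ i < sval σ (i+1)) := by
    simp only [Finset.mem_filter, Finset.mem_Icc]
    exact ⟨⟨hP, by omega⟩, (status_P c).1⟩
  unfold dascQ
  rw [← Finset.card_erase_add_one hmem]
  congr 1
  apply Finset.card_nbij' (fwd P Q) (bwd P Q)
  · intro i hi
    simp only [Finset.mem_coe, Finset.mem_erase, Finset.mem_filter, Finset.mem_Icc] at hi
    simp only [Finset.mem_coe, Finset.mem_filter, Finset.mem_Icc]
    have hb := c.fwd_bounds hi.2.1.1 hi.2.1.2
    exact ⟨⟨hb.1, hb.2⟩, ((status c i hi.2.1.1 (by omega) hi.1).2.1).mpr hi.2.2⟩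
  · intro j hj
    simp only [Finset.mem_coe, Finset.mem_filter, Finset.mem_Icc] at hj
    simp only [Finset.mem_coe, Finset.mem_erase, Finset.mem_filter, Finset.mem_Icc]
    have hb := c.bwd_bounds hj.1.1 hj.1.2
    have hne : bwd P Q j ≠ P := by
      intro h
      have hjq : j = Q - 1 := by
        have := congrArg (fwd P Q) h
        rwa [fwd_bwd hP hPQ, show fwd P Q P = Q-1 by unfold fwd; split_ifs <;> omega] at this
      have hsp := (status_P c).2.2.2
      rw [hjq] at hj
      exact hsp hj.2.1
    refine ⟨hne, ⟨hb.1, hb.2⟩, ?_⟩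
    have hst := (status c (bwd P Q j) hb.1 (by omega) hne).2.1
    rw [fwd_bwd hP hPQ] at hst
    exact hst.mp hj.2
  · intro i hi
    exact bwd_fwd hP hPQ
  · intro j _; exact fwd_bwd hP hPQ

lemma Cfg.dp_eq (c : Cfg n σ P Q) : dpQ (togL σ P Q) = dpQ σ + 1 := by
  have hP := c.hP; have hPQ := c.hPQ; have hQ := c.hQ
  have hmem : Q - 1 ∈ (Finset.Icc 2 (2*n - 1)).filter
      (fun i => sval (togL σ P Q) i < sval (togL σ P Q) (i-1) ∧
        sval (togL σ P Q) i = sval (togL σ P Q) (i+1)) := by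
    simp only [Finset.mem_filter, Finset.mem_Icc]
    exact ⟨⟨by omega, by omega⟩, (status_P c).2.1⟩
  unfold dpQ
  rw [← Finset.card_erase_add_one hmem]
  congr 1
  apply Finset.card_nbij' (bwd P Q) (fwd P Q)
  · intro j hj
    simp only [Finset.mem_coe, Finset.mem_erase, Finset.mem_filter, Finset.mem_Icc] at hj
    simp only [Finset.mem_coe, Finset.mem_filter, Finset.mem_Icc]
    have hne : bwd P Q j ≠ P := by
      intro h
      have hjq : j = Q - 1 := by
        have := congrArg (fwd P Q) h
        rwa [fwd_bwd hP hPQ, show fwd P Q P = Q-1 by unfold fwd; split_ifs <;> omega] at this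
      exact hj.1 hjq
    have hb2 : 2 ≤ bwd P Q j ∧ bwd P Q j ≤ 2*n - 1 := by
      have h1 := hj.1
      have h2 := hj.2.1
      unfold bwd; split_ifs <;> omega
    refine ⟨⟨hb2.1, hb2.2⟩, ?_⟩
    have hst := (status c (bwd P Q j) (by omega) (by omega) hne).2.2
    rw [fwd_bwd hP hPQ] at hst
    exact hst.mp hj.2.2
  · intro i hi
    simp only [Finset.mem_coe, Finset.mem_filter, Finset.mem_Icc] at hi
    simp only [Finset.mem_coe, Finset.mem_erase, Finset.mem_filter, Finset.mem_Icc]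
    have hne : i ≠ P := by
      intro h
      have h2 := hi.2.1
      have := c.ha
      rw [h] at h2
      omega
    have hne2 : i ≠ P + 1 := by
      intro h
      have h2 := hi.2.1
      have := c.hw (P+1) (by omega) (by omega)
      rw [h] at h2
      have e1 : sval σ (P+1-1) = sval σ P := by norm_num
      omega
    have hfb : 2 ≤ fwd P Q i ∧ fwd P Q i ≤ 2*n - 1 := by
      have h2 := hi.1.1
      have h3 := hi.1.2
      unfold fwd; split_ifs <;> omega
    have hfq : fwd P Q i ≠ Q - 1 := by
      intro h
      have := congrArg (bwd P Q) h
      rw [bwd_fwd hP hPQ, bwd_top hPQ] at this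
      exact hne this
    exact ⟨hfq, ⟨hfb.1, hfb.2⟩, ((status c i (by omega) (by omega) hne).2.2).mpr hi.2⟩
  · intro j _; exact fwd_bwd hP hPQ
  · intro i _; exact bwd_fwd hP hPQ

lemma Cfg'.toCfg (c : Cfg' n σ P Q) : Cfg n (togR σ P Q) P Q := by
  have hP := c.hP; have hPQ := c.hPQ; have hQ := c.hQ
  have hs := sval_togR σ hP hPQ hQ
  refine ⟨c.togR_mem, hP, hPQ, hQ, ?_, ?_, ?_⟩
  · rw [hs, hs, show fwd P Q P = Q - 1 by unfold fwd; split_ifs <;> omega,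
      show fwd P Q Q = Q by unfold fwd; split_ifs <;> omega]
    exact c.hEq
  · rw [hs, hs, show fwd P Q (P-1) = P - 1 by unfold fwd; split_ifs <;> omega,
      show fwd P Q P = Q - 1 by unfold fwd; split_ifs <;> omega]
    exact c.ha
  · intro t h1 h2
    rw [hs, hs, show fwd P Q P = Q - 1 by unfold fwd; split_ifs <;> omega,
      show fwd P Q t = t - 1 by unfold fwd; split_ifs <;> omega]
    exact c.hw (t-1) (by omega) (by omega)

end Stats
section Canon
variable {n : ℕ} {σ : Fin (2*n) → Fin (n+1)} {P Q : ℕ}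

/-- position of the second occurrence of the letter at position `P`. -/
def Qp {n : ℕ} (σ : Fin (2*n) → Fin (n+1)) (P : ℕ) : ℕ :=
  (((Finset.Icc 1 (2*n)).filter fun j => sval σ j = sval σ P).max).getD 0

/-- start of the maximal run of letters larger than `σ_J` just before position `J`. -/
def Pp {n : ℕ} (σ : Fin (2*n) → Fin (n+1)) (J : ℕ) : ℕ :=
  (((Finset.range J).filter fun t => sval σ t < sval σ J).max).getD 0 + 1

lemma getD_max_mem {s : Finset ℕ} (h : s.Nonempty) :
    s.max.getD 0 ∈ s ∧ ∀ x ∈ s, x ≤ s.max.getD 0 := by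
  obtain ⟨m, hm⟩ := Finset.max_of_nonempty h
  rw [hm]
  refine ⟨Finset.mem_of_max hm, fun x hx => ?_⟩
  have := Finset.le_max hx
  rw [hm] at this
  exact_mod_cast this

lemma mk_cfg (hσ : σ ∈ StirlingSet n) {p : ℕ} (h1 : 1 ≤ p) (h2 : p ≤ 2*n - 1)
    (hpred : sval σ (p-1) < sval σ p ∧ sval σ p < sval σ (p+1)) :
    Cfg n σ p (Qp σ p) := by
  have hn : 1 ≤ n := by omega
  have hk1 : 1 ≤ sval σ p := stir_nonzero hσ h1 (by omega)
  have hkn : sval σ p ≤ n := sval_le σ p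
  have hcard := stir_count hσ (sval σ p) hk1 hkn
  set F := (Finset.Icc 1 (2*n)).filter fun j => sval σ j = sval σ p with hF
  have hpF : p ∈ F := Finset.mem_filter.mpr ⟨Finset.mem_Icc.mpr ⟨h1, by omega⟩, rfl⟩
  rw [Finset.card_eq_two] at hcard
  obtain ⟨x, y, hxy, hFxy⟩ := hcard
  have hpxy : p = x ∨ p = y := by
    have := hpF
    rw [hFxy] at this
    simpa using this
  set q := if p = x then y else x with hq
  have hqF : q ∈ F := by
    rw [hFxy, hq]
    split_ifs <;> simp
  have hqp : q ≠ p := by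
    rw [hq]; split_ifs with h <;> omega
  have hqIcc : 1 ≤ q ∧ q ≤ 2*n ∧ sval σ q = sval σ p := by
    have := Finset.mem_filter.mp hqF
    have h' := Finset.mem_Icc.mp this.1
    exact ⟨h'.1, h'.2, this.2⟩
  have hlt : p < q := by
    by_contra h
    have hqlt : q < p := by omega
    by_cases hq1 : q = p - 1
    · have : sval σ (p-1) = sval σ p := by rw [← hq1]; exact hqIcc.2.2
      omega
    · have hb := stir_between hσ hqIcc.1 (show q < p-1 by omega) (show p-1 < p by omega)
        (by omega) (hqIcc.2.2.trans rfl).symm.symm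
      rw [hqIcc.2.2] at hb
      omega
  have hQq : Qp σ p = q := by
    have hQdef : Qp σ p = F.max.getD 0 := by unfold Qp; rw [← hF]
    have spec := getD_max_mem (s := F) ⟨p, hpF⟩
    have hmem := spec.1
    have hmax := spec.2
    have hQF : (Qp σ p) ∈ F := hmem
    have hQxy : Qp σ p = x ∨ Qp σ p = y := by
      rw [hFxy] at hQF; simpa using hQF
    have hqle := hmax q hqF
    have hple := hmax p hpF
    rw [hq]
    rcases hpxy with h | h <;> rcases hQxy with h' | h' <;> split_ifs with h'' <;> omega
  rw [hQq]
  have hq2 : p + 2 ≤ q := by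
    by_contra h
    have : q = p + 1 := by omega
    rw [this] at hqIcc
    omega
  refine ⟨hσ, h1, hq2, hqIcc.2.1, hqIcc.2.2.symm, hpred.1, ?_⟩
  intro t ht1 ht2
  exact stir_between hσ h1 ht1 ht2 (by omega) hqIcc.2.2.symm

lemma stir_pair_mem (hσ : σ ∈ StirlingSet n) {x y : ℕ} (hx : 1 ≤ x) (hy : y ≤ 2*n)
    (hxy : x < y) (hv : sval σ x = sval σ y) :
    ∀ t, sval σ t = sval σ x → t = x ∨ t = y := by
  intro t ht
  have hk1 : 1 ≤ sval σ x := stir_nonzero hσ hx (by omega)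
  have hcard := stir_count hσ (sval σ x) hk1 (sval_le σ x)
  have ht2 : 1 ≤ t ∧ t ≤ 2*n := by
    by_contra h
    rw [sval, dif_neg (by omega)] at ht
    omega
  have hsub : ({x, y} : Finset ℕ) ⊆ (Finset.Icc 1 (2*n)).filter fun j => sval σ j = sval σ x := by
    intro z hz
    simp only [Finset.mem_insert, Finset.mem_singleton] at hz
    rcases hz with rfl | rfl
    · exact Finset.mem_filter.mpr ⟨Finset.mem_Icc.mpr ⟨hx, by omega⟩, rfl⟩
    · exact Finset.mem_filter.mpr ⟨Finset.mem_Icc.mpr ⟨by omega, hy⟩, hv.symm⟩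
  have hcard2 : ({x, y} : Finset ℕ).card = 2 := by
    rw [Finset.card_insert_of_notMem (by simp; omega), Finset.card_singleton]
  have heq : ((Finset.Icc 1 (2*n)).filter fun j => sval σ j = sval σ x) = {x, y} :=
    (Finset.eq_of_subset_of_card_le hsub (by omega)).symm
  have : t ∈ (Finset.Icc 1 (2*n)).filter fun j => sval σ j = sval σ x :=
    Finset.mem_filter.mpr ⟨Finset.mem_Icc.mpr ⟨ht2.1, ht2.2⟩, ht⟩
  rw [heq] at this
  simpa using this

lemma mk_cfg' (hσ : σ ∈ StirlingSet n) {J : ℕ} (h1 : 2 ≤ J) (h2 : J ≤ 2*n - 1)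
    (hpred : sval σ J < sval σ (J-1) ∧ sval σ J = sval σ (J+1)) :
    Cfg' n σ (Pp σ J) (J+1) := by
  have hn : 1 ≤ n := by omega
  have hk1 : 1 ≤ sval σ J := stir_nonzero hσ (by omega) (by omega)
  set G := (Finset.range J).filter fun t => sval σ t < sval σ J with hG
  have h0G : 0 ∈ G := by
    refine Finset.mem_filter.mpr ⟨Finset.mem_range.mpr (by omega), ?_⟩
    rw [sval, dif_neg (by omega)]
    omega
  have spec := getD_max_mem (s := G) ⟨0, h0G⟩
  set m := G.max.getD 0 with hm
  have hmG := Finset.mem_filter.mp spec.1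
  have hmJ : m < J := Finset.mem_range.mp hmG.1
  have hocc := stir_pair_mem hσ (show 1 ≤ J by omega) (show J+1 ≤ 2*n by omega)
    (show J < J+1 by omega) hpred.2
  have hmJ1 : m ≠ J - 1 := by
    intro h
    have : sval σ m = sval σ (J-1) := by rw [h]
    omega
  have hPp : Pp σ J = m + 1 := rfl
  rw [hPp]
  refine ⟨hσ, by omega, by omega, by omega, ?_, ?_, ?_⟩
  · rw [show J + 1 - 1 = J by omega]; exact hpred.2
  · rw [show m + 1 - 1 = m by omega, show J + 1 - 1 = J by omega]
    exact hmG.2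
  · intro t ht1 ht2
    rw [show J + 1 - 1 = J by omega] at *
    have htJ : t < J := by omega
    have htG : t ∉ G := by
      intro h
      have := spec.2 t h
      omega
    have hnlt : ¬ (sval σ t < sval σ J) := by
      intro h
      exact htG (Finset.mem_filter.mpr ⟨Finset.mem_range.mpr htJ, h⟩)
    have hne : sval σ t ≠ sval σ J := by
      intro h
      rcases hocc t h with h' | h' <;> omega
    omega

lemma Cfg.Qp_eq (c : Cfg n σ P Q) : Qp σ P = Q := by
  have hP := c.hP; have hPQ := c.hPQ; have hQ := c.hQ
  set F := (Finset.Icc 1 (2*n)).filter fun j => sval σ j = sval σ P with hF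
  have hpF : P ∈ F := Finset.mem_filter.mpr ⟨Finset.mem_Icc.mpr ⟨hP, by omega⟩, rfl⟩
  have hqF : Q ∈ F := Finset.mem_filter.mpr ⟨Finset.mem_Icc.mpr ⟨by omega, hQ⟩, c.hEq.symm⟩
  have spec := getD_max_mem (s := F) ⟨P, hpF⟩
  have hmem := Finset.mem_filter.mp spec.1
  have h1 := c.occ _ hmem.2
  have h2 := spec.2 Q hqF
  unfold Qp
  rw [← hF]
  omega

lemma Cfg.Pp_eq (c : Cfg n σ P Q) : Pp (togL σ P Q) (Q-1) = P := by
  have hP := c.hP; have hPQ := c.hPQ; have hQ := c.hQ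
  have hs' := sval_togL σ hP hPQ hQ
  set σ' := togL σ P Q with hσ'
  set G := (Finset.range (Q-1)).filter fun t => sval σ' t < sval σ' (Q-1) with hG
  have hkey : sval σ' (Q-1) = sval σ P := by
    rw [hs', bwd_top hPQ]
  have hPG : P - 1 ∈ G := by
    refine Finset.mem_filter.mpr ⟨Finset.mem_range.mpr (by omega), ?_⟩
    rw [hkey, hs', bwd_lo hPQ (by omega)]
    exact c.ha
  have hbound : ∀ x ∈ G, x ≤ P - 1 := by
    intro x hx
    have hx' := Finset.mem_filter.mp hx
    have hxr := Finset.mem_range.mp hx'.1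
    by_contra h
    have hxP : P ≤ x := by omega
    have : sval σ' x = sval σ (x+1) := by
      rw [hs', bwd_mid hxP (by omega)]
    have hw := c.hw (x+1) (by omega) (by omega)
    rw [this, hkey] at hx'
    omega
  have spec := getD_max_mem (s := G) ⟨P-1, hPG⟩
  have h1 := spec.2 (P-1) hPG
  have h2 := hbound _ spec.1
  unfold Pp
  rw [← hG]
  omega

end Canon
section Counting
variable {n : ℕ}

/-- number of Stirling permutations with given statistics. -/
def Nst (n i a b : ℕ) : ℕ :=
  ((StirlingSet n).filter fun σ => lapQ σ = i ∧ dascQ σ = a ∧ dpQ σ = b).card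

lemma step1 (n i a b : ℕ) :
    Nst n i (a+1) b * (a+1) = Nst n i a (b+1) * (b+1) := by
  classical
  set T₁ := (StirlingSet n).filter fun σ => lapQ σ = i ∧ dascQ σ = (a+1) ∧ dpQ σ = b with hT₁
  set T₂ := (StirlingSet n).filter fun σ => lapQ σ = i ∧ dascQ σ = a ∧ dpQ σ = (b+1) with hT₂
  have c1 : (T₁.sigma (fun σ => (Finset.Icc 1 (2*n - 1)).filter
      (fun p => sval σ (p-1) < sval σ p ∧ sval σ p < sval σ (p+1)))).card
      = Nst n i (a+1) b * (a+1) := by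
    rw [Finset.card_sigma]
    have : ∀ σ ∈ T₁, ((Finset.Icc 1 (2*n - 1)).filter
        (fun p => sval σ (p-1) < sval σ p ∧ sval σ p < sval σ (p+1))).card = a + 1 := by
      intro σ hσ
      have := (Finset.mem_filter.mp hσ).2.2.1
      exact this
    rw [Finset.sum_congr rfl this, Finset.sum_const, smul_eq_mul]
    rfl
  have c2 : (T₂.sigma (fun σ => (Finset.Icc 2 (2*n - 1)).filter
      (fun p => sval σ p < sval σ (p-1) ∧ sval σ p = sval σ (p+1)))).card
      = Nst n i a (b+1) * (b+1) := by
    rw [Finset.card_sigma]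
    have : ∀ σ ∈ T₂, ((Finset.Icc 2 (2*n - 1)).filter
        (fun p => sval σ p < sval σ (p-1) ∧ sval σ p = sval σ (p+1))).card = b + 1 := by
      intro σ hσ
      have := (Finset.mem_filter.mp hσ).2.2.2
      exact this
    rw [Finset.sum_congr rfl this, Finset.sum_const, smul_eq_mul]
    rfl
  rw [← c1, ← c2]
  apply Finset.card_nbij' (fun x => ⟨togL x.1 x.2 (Qp x.1 x.2), Qp x.1 x.2 - 1⟩)
    (fun y => ⟨togR y.1 (Pp y.1 y.2) (y.2+1), Pp y.1 y.2⟩)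
  · rintro ⟨σ, p⟩ hx
    rw [Finset.mem_coe, Finset.mem_sigma] at hx
    dsimp only at hx ⊢
    obtain ⟨hx1, hx2⟩ := hx
    have hσ := Finset.mem_filter.mp hx1
    have hp := Finset.mem_filter.mp hx2
    have hpIcc := Finset.mem_Icc.mp hp.1
    have c := mk_cfg hσ.1 hpIcc.1 hpIcc.2 hp.2
    rw [Finset.mem_coe, Finset.mem_sigma]
    dsimp only
    constructor
    · refine Finset.mem_filter.mpr ⟨c.togL_mem, ?_, ?_, ?_⟩
      · rw [c.lap_eq]; exact hσ.2.1
      · have := c.dasc_eq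
        have h2 := hσ.2.2.1
        omega
      · rw [c.dp_eq]
        have h2 := hσ.2.2.2
        omega
    · refine Finset.mem_filter.mpr ⟨Finset.mem_Icc.mpr
        ⟨by have := c.hPQ; omega, by have := c.hQ; have := c.hPQ; omega⟩, (status_P c).2.1⟩
  · rintro ⟨σ', J⟩ hy
    rw [Finset.mem_coe, Finset.mem_sigma] at hy
    dsimp only at hy ⊢
    obtain ⟨hy1, hy2⟩ := hy
    have hσ' := Finset.mem_filter.mp hy1
    have hJ := Finset.mem_filter.mp hy2
    have hJIcc := Finset.mem_Icc.mp hJ.1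
    have c' := mk_cfg' hσ'.1 hJIcc.1 hJIcc.2 hJ.2
    have c := c'.toCfg
    have hLR : togL (togR σ' (Pp σ' J) (J+1)) (Pp σ' J) (J+1) = σ' :=
      togL_togR σ' c'.hP c'.hPQ c'.hQ
    rw [Finset.mem_coe, Finset.mem_sigma]
    dsimp only
    constructor
    · refine Finset.mem_filter.mpr ⟨c.mem, ?_, ?_, ?_⟩
      · have := c.lap_eq
        rw [hLR] at this
        rw [← this]; exact hσ'.2.1
      · have := c.dasc_eq
        rw [hLR] at this
        have h2 := hσ'.2.2.1
        omega
      · have := c.dp_eq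
        rw [hLR] at this
        have h2 := hσ'.2.2.2
        omega
    · refine Finset.mem_filter.mpr ⟨Finset.mem_Icc.mpr
        ⟨c.hP, by have := c.hPQ; have := c.hQ; omega⟩, (status_P c).1⟩
  · rintro ⟨σ, p⟩ hx
    rw [Finset.mem_coe, Finset.mem_sigma] at hx
    dsimp only at hx ⊢
    obtain ⟨hx1, hx2⟩ := hx
    have hσ := Finset.mem_filter.mp hx1
    have hp := Finset.mem_filter.mp hx2
    have hpIcc := Finset.mem_Icc.mp hp.1
    have c := mk_cfg hσ.1 hpIcc.1 hpIcc.2 hp.2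
    have hPp := c.Pp_eq
    have hQ1 : Qp σ p - 1 + 1 = Qp σ p := by have := c.hPQ; omega
    rw [hPp, hQ1, togR_togL σ c.hP c.hPQ c.hQ]
  · rintro ⟨σ', J⟩ hy
    rw [Finset.mem_coe, Finset.mem_sigma] at hy
    dsimp only at hy ⊢
    obtain ⟨hy1, hy2⟩ := hy
    have hσ' := Finset.mem_filter.mp hy1
    have hJ := Finset.mem_filter.mp hy2
    have hJIcc := Finset.mem_Icc.mp hJ.1
    have c' := mk_cfg' hσ'.1 hJIcc.1 hJIcc.2 hJ.2
    have c := c'.toCfg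
    have hQp := c.Qp_eq
    rw [hQp, togL_togR σ' c'.hP c'.hPQ c'.hQ, show J + 1 - 1 = J by omega]

lemma step2 (n i : ℕ) : ∀ b a, Nst n i a b = Nat.choose (a+b) b * Nst n i (a+b) 0 := by
  intro b
  induction b with
  | zero => intro a; simp
  | succ b ih =>
    intro a
    have h1 := step1 n i a b
    have h2 := ih (a+1)
    have h3 : Nat.choose (a+b+1) (b+1) * (b+1) = Nat.choose (a+b+1) b * (a+1) := by
      have := Nat.choose_succ_right_eq (a+b+1) b
      rw [this, show a+b+1-b = a+1 by omega]
    apply Nat.eq_of_mul_eq_mul_right (show 0 < b+1 by omega)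
    calc Nst n i a (b+1) * (b+1) = Nst n i (a+1) b * (a+1) := h1.symm
      _ = (Nat.choose (a+b+1) b * Nst n i (a+b+1) 0) * (a+1) := by
          rw [h2, show a+1+b = a+b+1 by omega]
      _ = (Nat.choose (a+b+1) (b+1) * (b+1)) * Nst n i (a+b+1) 0 := by rw [h3]; ring
      _ = Nat.choose (a+(b+1)) (b+1) * Nst n i (a+(b+1)) 0 * (b+1) := by
          rw [show a+(b+1) = a+b+1 by omega]; ring

end Counting
section Ranges
variable {n : ℕ} {σ : Fin (2*n) → Fin (n+1)}

lemma top_pair (hσ : σ ∈ StirlingSet n) (hn : 1 ≤ n) :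
    ∃ p, 1 ≤ p ∧ p + 1 ≤ 2*n ∧ sval σ p = n ∧ sval σ (p+1) = n := by
  have hcard := stir_count hσ n hn le_rfl
  rw [Finset.card_eq_two] at hcard
  obtain ⟨x, y, hxy, hF⟩ := hcard
  have hx : x ∈ (Finset.Icc 1 (2*n)).filter fun j => sval σ j = n := by rw [hF]; simp
  have hy : y ∈ (Finset.Icc 1 (2*n)).filter fun j => sval σ j = n := by rw [hF]; simp
  simp only [Finset.mem_filter, Finset.mem_Icc] at hx hy
  rcases Nat.lt_or_ge x y with h | h
  · refine ⟨x, hx.1.1, ?_, hx.2, ?_⟩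
    · omega
    · by_contra hne
      have hy1 : y ≠ x + 1 := by
        intro he; rw [he] at hy; exact hne hy.2
      have := stir_between hσ hx.1.1 (show x < x+1 by omega) (show x+1 < y by omega)
        hy.1.2 (hx.2.trans hy.2.symm)
      have := sval_le σ (x+1)
      omega
  · have h' : y < x := by omega
    refine ⟨y, hy.1.1, ?_, hy.2, ?_⟩
    · omega
    · by_contra hne
      have hy1 : x ≠ y + 1 := by
        intro he; rw [he] at hx; exact hne hx.2
      have := stir_between hσ hy.1.1 (show y < y+1 by omega) (show y+1 < x by omega)
        hx.1.2 (hy.2.trans hx.2.symm)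
      have := sval_le σ (y+1)
      omega

lemma lap_ge_one (hσ : σ ∈ StirlingSet n) (hn : 1 ≤ n) : 1 ≤ lapQ σ := by
  obtain ⟨p, hp1, hp2, hv1, hv2⟩ := top_pair hσ hn
  have hpred : sval σ (p-1) < sval σ p := by
    rw [hv1]
    have hle := sval_le σ (p-1)
    have hne : sval σ (p-1) ≠ n := by
      intro h
      have := stir_pair_mem hσ hp1 hp2 (by omega) (hv1.trans hv2.symm) (p-1)
        (by rw [h, hv1])
      omega
    omega
  have hmem : p ∈ (Finset.Icc 1 (2*n - 1)).filter
      (fun i => sval σ (i-1) < sval σ i ∧ sval σ i = sval σ (i+1)) := by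
    refine Finset.mem_filter.mpr ⟨Finset.mem_Icc.mpr ⟨hp1, by omega⟩, hpred, ?_⟩
    rw [hv1, hv2]
  have : 0 < lapQ σ := Finset.card_pos.mpr ⟨p, hmem⟩
  omega

lemma lap_le (hσ : σ ∈ StirlingSet n) : lapQ σ ≤ n := by
  have hsub : ∀ p ∈ (Finset.Icc 1 (2*n - 1)).filter
      (fun i => sval σ (i-1) < sval σ i ∧ sval σ i = sval σ (i+1)),
      sval σ p ∈ Finset.Icc 1 n := by
    intro p hp
    simp only [Finset.mem_filter, Finset.mem_Icc] at hp
    exact Finset.mem_Icc.mpr ⟨stir_nonzero hσ hp.1.1 (by omega), sval_le σ p⟩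
  have hinj : ∀ p ∈ (Finset.Icc 1 (2*n - 1)).filter
      (fun i => sval σ (i-1) < sval σ i ∧ sval σ i = sval σ (i+1)),
      ∀ q ∈ (Finset.Icc 1 (2*n - 1)).filter
      (fun i => sval σ (i-1) < sval σ i ∧ sval σ i = sval σ (i+1)),
      sval σ p = sval σ q → p = q := by
    intro p hp q hq he
    simp only [Finset.mem_filter, Finset.mem_Icc] at hp hq
    have hocc := stir_pair_mem hσ hp.1.1 (show p+1 ≤ 2*n by omega) (by omega) hp.2.2
    have h1 := hocc q he.symm
    have h2 := hocc (q+1) (by rw [← hq.2.2, ← he])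
    omega
  calc lapQ σ ≤ (Finset.Icc 1 n).card := Finset.card_le_card_of_injOn _ hsub hinj
    _ = n := by simp

lemma dasc_dp_lt (hσ : σ ∈ StirlingSet n) (hn : 1 ≤ n) : dascQ σ + dpQ σ < n := by
  set A := (Finset.Icc 1 (2*n - 1)).filter
      (fun i => sval σ (i-1) < sval σ i ∧ sval σ i < sval σ (i+1)) with hA
  set B := (Finset.Icc 2 (2*n - 1)).filter
      (fun i => sval σ i < sval σ (i-1) ∧ sval σ i = sval σ (i+1)) with hB
  have hdisj : Disjoint A B := by
    rw [Finset.disjoint_left]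
    intro p hp hq
    rw [hA] at hp; rw [hB] at hq
    simp only [Finset.mem_filter, Finset.mem_Icc] at hp hq
    omega
  have hAfact : ∀ p ∈ A, 1 ≤ p ∧ p ≤ 2*n-1 ∧ sval σ (p-1) < sval σ p ∧
      sval σ p < sval σ (p+1) := by
    intro p hp; rw [hA] at hp
    simp only [Finset.mem_filter, Finset.mem_Icc] at hp
    exact ⟨hp.1.1, hp.1.2, hp.2.1, hp.2.2⟩
  have hBfact : ∀ p ∈ B, 2 ≤ p ∧ p ≤ 2*n-1 ∧ sval σ p < sval σ (p-1) ∧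
      sval σ p = sval σ (p+1) := by
    intro p hp; rw [hB] at hp
    simp only [Finset.mem_filter, Finset.mem_Icc] at hp
    exact ⟨hp.1.1, hp.1.2, hp.2.1, hp.2.2⟩
  have hsub : ∀ p ∈ A ∪ B, sval σ p ∈ Finset.Icc 1 (n-1) := by
    intro p hp
    rcases Finset.mem_union.mp hp with h | h
    · have hf := hAfact p h
      have h1 : 1 ≤ sval σ p := stir_nonzero hσ hf.1 (by omega)
      have h2 := sval_le σ (p+1)
      refine Finset.mem_Icc.mpr ⟨h1, by omega⟩
    · have hf := hBfact p h
      have h1 : 1 ≤ sval σ p := stir_nonzero hσ (by omega) (by omega)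
      have h2 := sval_le σ (p-1)
      refine Finset.mem_Icc.mpr ⟨h1, by omega⟩
  have hinj : ∀ p ∈ A ∪ B, ∀ q ∈ A ∪ B, sval σ p = sval σ q → p = q := by
    intro p hp q hq he
    by_contra hne
    -- helper: a double ascent position cannot be second occurrence
    rcases Finset.mem_union.mp hp with h | h <;> rcases Finset.mem_union.mp hq with h' | h'
    · -- both double ascents
      have hf := hAfact p h
      have hf' := hAfact q h'
      rcases Nat.lt_or_ge p q with hlt | hge
      · have hocc := stir_pair_mem hσ hf.1 (show q ≤ 2*n by omega) hlt he
        by_cases hq1 : q = p + 1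
        · have : sval σ (q-1) = sval σ p := by rw [hq1]; norm_num
          omega
        · have := stir_between hσ hf.1 (show p < q-1 by omega) (show q-1 < q by omega)
            (by omega) he
          have e1 : sval σ (q-1) < sval σ q := hf'.2.2.1
          omega
      · have hlt : q < p := by omega
        by_cases hq1 : p = q + 1
        · have : sval σ (p-1) = sval σ q := by rw [hq1]; norm_num
          omega
        · have := stir_between hσ hf'.1 (show q < p-1 by omega) (show p-1 < p by omega)
            (by omega) he.symm
          omega
    · -- p double ascent, q descent-plateau
      have hf := hAfact p h
      have hf' := hBfact q h'
      have hocc := stir_pair_mem hσ (show 1 ≤ q by omega) (show q+1 ≤ 2*n by omega)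
        (by omega) hf'.2.2.2
      rcases hocc p (by rw [he]) with h1 | h1
      · exact hne h1
      · have : sval σ (p-1) = sval σ q := by rw [h1]; norm_num
        omega
    · -- p descent-plateau, q double ascent
      have hf := hBfact p h
      have hf' := hAfact q h'
      have hocc := stir_pair_mem hσ (show 1 ≤ p by omega) (show p+1 ≤ 2*n by omega)
        (by omega) hf.2.2.2
      rcases hocc q (by rw [← he]) with h1 | h1
      · exact hne h1.symm
      · have : sval σ (q-1) = sval σ p := by rw [h1]; norm_num
        omega
    · -- both descent-plateaus
      have hf := hBfact p h
      have hf' := hBfact q h'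
      have hocc := stir_pair_mem hσ (show 1 ≤ p by omega) (show p+1 ≤ 2*n by omega)
        (by omega) hf.2.2.2
      have h1 := hocc q (by rw [← he])
      have h2 := hocc (q+1) (by rw [← hf'.2.2.2, ← he])
      omega
  have hcard : (A ∪ B).card ≤ (Finset.Icc 1 (n-1)).card :=
    Finset.card_le_card_of_injOn _ hsub hinj
  rw [Finset.card_union_of_disjoint hdisj] at hcard
  have : (Finset.Icc 1 (n-1)).card = n - 1 := by simp
  have hAc : dascQ σ = A.card := rfl
  have hBc : dpQ σ = B.card := rfl
  omega

end Ranges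

theorem statement_15 (n : ℕ) (hn : 1 ≤ n) :
    (∑ σ ∈ StirlingSet n,
        (X 0 : MvPolynomial (Fin 3) ℤ) ^ lapQ σ * X 1 ^ dascQ σ * X 2 ^ dpQ σ) =
      ∑ i ∈ Finset.Icc 1 n, ∑ j ∈ Finset.range n,
        (gammaNum n i j : MvPolynomial (Fin 3) ℤ) * X 0 ^ i * (X 1 + X 2) ^ j := by
  
  classical
  set V : Finset (ℕ × ℕ × ℕ) :=
    (Finset.Icc 1 n) ×ˢ ((Finset.range n ×ˢ Finset.range n).filter
      fun ab => ab.1 + ab.2 < n) with hV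
  have hmemV : ∀ t : ℕ × ℕ × ℕ, t ∈ V ↔
      (1 ≤ t.1 ∧ t.1 ≤ n ∧ t.2.1 < n ∧ t.2.2 < n ∧ t.2.1 + t.2.2 < n) := by
    intro t
    rw [hV]
    simp only [Finset.mem_product, Finset.mem_filter, Finset.mem_Icc, Finset.mem_range]
    tauto
  have hLHS : (∑ σ ∈ StirlingSet n,
        (X 0 : MvPolynomial (Fin 3) ℤ) ^ lapQ σ * X 1 ^ dascQ σ * X 2 ^ dpQ σ)
      = ∑ t ∈ V, Nst n t.1 t.2.1 t.2.2 •
          ((X 0 : MvPolynomial (Fin 3) ℤ) ^ t.1 * X 1 ^ t.2.1 * X 2 ^ t.2.2) := by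
    have h1 : (∑ σ ∈ StirlingSet n,
          (X 0 : MvPolynomial (Fin 3) ℤ) ^ lapQ σ * X 1 ^ dascQ σ * X 2 ^ dpQ σ)
        = ∑ σ ∈ StirlingSet n,
            (fun t : ℕ × ℕ × ℕ => (X 0 : MvPolynomial (Fin 3) ℤ) ^ t.1 * X 1 ^ t.2.1
              * X 2 ^ t.2.2) ((fun σ => (lapQ σ, dascQ σ, dpQ σ)) σ) :=
      Finset.sum_congr rfl (fun σ _ => rfl)
    rw [h1, Finset.sum_comp
      (fun t : ℕ × ℕ × ℕ => (X 0 : MvPolynomial (Fin 3) ℤ) ^ t.1 * X 1 ^ t.2.1 * X 2 ^ t.2.2)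
      (fun σ => (lapQ σ, dascQ σ, dpQ σ))]
    have himg : (StirlingSet n).image (fun σ => (lapQ σ, dascQ σ, dpQ σ)) ⊆ V := by
      intro t ht
      obtain ⟨σ, hσ, rfl⟩ := Finset.mem_image.mp ht
      rw [hmemV]
      have e1 := lap_ge_one hσ hn
      have e2 := lap_le hσ
      have e3 := dasc_dp_lt hσ hn
      exact ⟨e1, e2, show dascQ σ < n by omega, show dpQ σ < n by omega, e3⟩
    rw [Finset.sum_subset himg ?zero]
    case zero =>
      intro t _ htim
      have hz : ((StirlingSet n).filter
          (fun σ => (fun σ => (lapQ σ, dascQ σ, dpQ σ)) σ = t)).card = 0 := by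
        rw [Finset.card_eq_zero, Finset.filter_eq_empty_iff]
        intro σ hσ he
        exact htim (Finset.mem_image.mpr ⟨σ, hσ, he⟩)
      rw [hz, zero_smul]
    apply Finset.sum_congr rfl
    intro t _
    congr 1
    unfold Nst
    congr 1
    apply Finset.filter_congr
    intro σ _
    simp [Prod.ext_iff]
  rw [hLHS]
  have hRHS : (∑ i ∈ Finset.Icc 1 n, ∑ j ∈ Finset.range n,
      (gammaNum n i j : MvPolynomial (Fin 3) ℤ) * X 0 ^ i * (X 1 + X 2) ^ j)
      = ∑ x ∈ ((Finset.Icc 1 n) ×ˢ (Finset.range n)).sigma (fun ij => Finset.range (ij.2+1)),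
        (Nat.choose x.1.2 x.2 * gammaNum n x.1.1 x.1.2) •
          ((X 0 : MvPolynomial (Fin 3) ℤ) ^ x.1.1 * X 1 ^ x.2 * X 2 ^ (x.1.2 - x.2)) := by
    rw [← Finset.sum_product', ← Finset.sum_sigma' (Finset.Icc 1 n ×ˢ Finset.range n)
      (fun ij => Finset.range (ij.2+1))
      (fun ij m => (Nat.choose ij.2 m * gammaNum n ij.1 ij.2) •
        ((X 0 : MvPolynomial (Fin 3) ℤ) ^ ij.1 * X 1 ^ m * X 2 ^ (ij.2 - m)))]
    apply Finset.sum_congr rfl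
    intro ij _
    rw [add_pow, Finset.mul_sum]
    apply Finset.sum_congr rfl
    intro m _
    rw [nsmul_eq_mul]
    push_cast
    ring
  rw [hRHS]
  apply Finset.sum_nbij' (fun t => (⟨(t.1, t.2.1 + t.2.2), t.2.1⟩ : (_ : ℕ × ℕ) × ℕ))
    (fun x => (x.1.1, x.2, x.1.2 - x.2))
  · intro t ht
    rw [hmemV] at ht
    rw [Finset.mem_sigma, Finset.mem_product]
    exact ⟨⟨Finset.mem_Icc.mpr ⟨ht.1, ht.2.1⟩,
      Finset.mem_range.mpr (show t.2.1 + t.2.2 < n by omega)⟩,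
      Finset.mem_range.mpr (show t.2.1 < t.2.1 + t.2.2 + 1 by omega)⟩
  · intro x hx
    rw [Finset.mem_sigma] at hx
    obtain ⟨hx1, hx2⟩ := hx
    rw [Finset.mem_product] at hx1
    have h1 := Finset.mem_Icc.mp hx1.1
    have h2 := Finset.mem_range.mp hx1.2
    have h3 := Finset.mem_range.mp hx2
    rw [hmemV]
    exact ⟨h1.1, h1.2, show x.2 < n by omega, show x.1.2 - x.2 < n by omega,
      show x.2 + (x.1.2 - x.2) < n by omega⟩
  · intro t _
    show (t.1, t.2.1, t.2.1 + t.2.2 - t.2.1) = t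
    rw [show t.2.1 + t.2.2 - t.2.1 = t.2.2 by omega]
  · intro x hx
    rw [Finset.mem_sigma] at hx
    have h3 := Finset.mem_range.mp hx.2
    show (⟨(x.1.1, x.2 + (x.1.2 - x.2)), x.2⟩ : (_ : ℕ × ℕ) × ℕ) = x
    rw [show x.2 + (x.1.2 - x.2) = x.1.2 by omega]
  · intro t ht
    rw [hmemV] at ht
    show Nst n t.1 t.2.1 t.2.2 • ((X 0 : MvPolynomial (Fin 3) ℤ) ^ t.1 * X 1 ^ t.2.1 * X 2 ^ t.2.2)
      = (Nat.choose (t.2.1 + t.2.2) t.2.1 * gammaNum n t.1 (t.2.1 + t.2.2)) •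
        ((X 0 : MvPolynomial (Fin 3) ℤ) ^ t.1 * X 1 ^ t.2.1 * X 2 ^ (t.2.1 + t.2.2 - t.2.1))
    rw [show t.2.1 + t.2.2 - t.2.1 = t.2.2 by omega]
    have hs2 : Nst n t.1 t.2.1 t.2.2
        = Nat.choose (t.2.1 + t.2.2) t.2.2 * gammaNum n t.1 (t.2.1 + t.2.2) := by
      have := step2 n t.1 t.2.2 t.2.1
      rw [this]
      rfl
    have hcs : Nat.choose (t.2.1 + t.2.2) t.2.1 = Nat.choose (t.2.1 + t.2.2) t.2.2 := by
      have := Nat.choose_symm (show t.2.1 ≤ t.2.1 + t.2.2 by omega) (n := t.2.1 + t.2.2)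
      rw [show t.2.1 + t.2.2 - t.2.1 = t.2.2 by omega] at this
      omega
    rw [hs2, hcs]
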